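/- Let G be a graph and v a vertex contained in no even cycle, with neighbors w_1, …, w_r. Then p(G; z) = p(G − v; z) + z · Σ_{i=1}^r p(G − {v, w_i}; z). -/

import Mathlib

open Polynomial

variable {V : Type*}

/-- `M` (a finite set of edges) is a matching of the graph `G`:
its members are edges of `G` and no two distinct members share an endpoint. -/
def IsGraphMatching (G : SimpleGraph V) (M : Finset (Sym2 V)) : Prop :=
  (M : Set (Sym2 V)) ⊆ G.edgeSet ∧
    ∀ e ∈ M, ∀ f ∈ M, e ≠ f → ∀ x, x ∈ e → x ∉ f

/-- The set of vertices covered by the edge set `M` is exactly `S`. -/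
def Covers (M : Finset (Sym2 V)) (S : Finset V) : Prop :=
  ∀ x, x ∈ S ↔ ∃ e ∈ M, x ∈ e

/-- `M` is a perfect matching of the induced subgraph `G[S]`. -/
def IsPerfectMatchingOn (G : SimpleGraph V) (M : Finset (Sym2 V)) (S : Finset V) : Prop :=
  IsGraphMatching G M ∧ Covers M S

/-- `S` is a perfectly matchable set of `G`. -/
def IsPMS (G : SimpleGraph V) (S : Finset V) : Prop :=
  ∃ M, IsPerfectMatchingOn G M S

open Classical in
/-- The perfectly matchable set polynomial of the subgraph of `G` induced on the
ground vertex set `A`: the generating function `∑ p_{2k} z^k` where `p_{2k}` is the number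
of perfectly matchable sets `S ⊆ A` with `|S| = 2k`. -/
noncomputable def pmPoly [Fintype V] (G : SimpleGraph V) (A : Finset V) : Polynomial ℤ :=
  ∑ S ∈ A.powerset, if IsPMS G S then X ^ (S.card / 2) else 0

/-- `G` has no cycle of even length. -/
def NoEvenCycle (G : SimpleGraph V) : Prop :=
  ∀ (v : V) (c : G.Walk v v), c.IsCycle → ¬ Even c.length

open SimpleGraph

open Classical in
noncomputable def pmPartner (M : Finset (Sym2 V)) (x : V) : V :=
  if h : ∃ y, s(x, y) ∈ M then h.choose else x

section Partner

variable {G : SimpleGraph V} {M : Finset (Sym2 V)} {S : Finset V}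

lemma covers_mem_of_edge (hC : Covers M S) {e : Sym2 V} (he : e ∈ M) {x : V} (hx : x ∈ e) :
    x ∈ S := (hC x).2 ⟨e, he, hx⟩

lemma exists_partner (hC : Covers M S) {x : V} (hx : x ∈ S) : ∃ y, s(x, y) ∈ M := by
  obtain ⟨e, he, hxe⟩ := (hC x).1 hx
  obtain ⟨y, rfl⟩ := Sym2.mem_iff_exists.1 hxe
  exact ⟨y, he⟩

lemma pmPartner_edge_mem (hC : Covers M S) {x : V} (hx : x ∈ S) :
    s(x, pmPartner M x) ∈ M := by
  have h := exists_partner hC hx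
  rw [pmPartner, dif_pos h]
  exact h.choose_spec

lemma pmPartner_unique (hM : IsGraphMatching G M) (hC : Covers M S) {x y : V}
    (hxy : s(x, y) ∈ M) : pmPartner M x = y := by
  have hx : x ∈ S := covers_mem_of_edge hC hxy (by simp)
  have hp := pmPartner_edge_mem hC hx
  by_contra hne
  have hne' : s(x, pmPartner M x) ≠ s(x, y) := fun h => hne (Sym2.congr_right.1 h)
  exact hM.2 _ hp _ hxy hne' x (by simp) (by simp)

variable (h : IsPerfectMatchingOn G M S)
include h

lemma pmPartner_adj {x : V} (hx : x ∈ S) : G.Adj x (pmPartner M x) :=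
  (SimpleGraph.mem_edgeSet G).1 (h.1.1 (pmPartner_edge_mem h.2 hx))

lemma pmPartner_mem {x : V} (hx : x ∈ S) : pmPartner M x ∈ S :=
  covers_mem_of_edge h.2 (pmPartner_edge_mem h.2 hx) (by simp)

lemma pmPartner_invol {x : V} (hx : x ∈ S) : pmPartner M (pmPartner M x) = x := by
  apply pmPartner_unique h.1 h.2
  have := pmPartner_edge_mem h.2 hx
  rwa [Sym2.eq_swap] at this

end Partner

noncomputable def seqWalk (G : SimpleGraph V) (x : ℕ → V)
    (hadj : ∀ i, G.Adj (x i) (x (i + 1))) : (n : ℕ) → G.Walk (x 0) (x n)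
  | 0 => SimpleGraph.Walk.nil
  | (n + 1) => (seqWalk G x hadj n).concat (hadj n)

lemma seqWalk_length (G : SimpleGraph V) (x : ℕ → V)
    (hadj : ∀ i, G.Adj (x i) (x (i + 1))) (n : ℕ) : (seqWalk G x hadj n).length = n := by
  induction n with
  | zero => rfl
  | succ n ih => simp [seqWalk, ih]

lemma seqWalk_support (G : SimpleGraph V) (x : ℕ → V)
    (hadj : ∀ i, G.Adj (x i) (x (i + 1))) (n : ℕ) :
    (seqWalk G x hadj n).support = (List.range (n + 1)).map x := by
  induction n with
  | zero => simp [seqWalk, List.range_succ]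
  | succ n ih => simp [seqWalk, ih, List.range_succ]

lemma seqWalk_edges (G : SimpleGraph V) (x : ℕ → V)
    (hadj : ∀ i, G.Adj (x i) (x (i + 1))) (n : ℕ) :
    (seqWalk G x hadj n).edges = (List.range n).map (fun i => s(x i, x (i + 1))) := by
  induction n with
  | zero => simp [seqWalk]
  | succ n ih => simp [seqWalk, ih, List.range_succ]

lemma no_two_partners [Fintype V] (G : SimpleGraph V) (v : V)
    (hv : ∀ (a : V) (c : G.Walk a a), c.IsCycle → Even c.length → v ∉ c.support)
    {S : Finset V} {M₁ M₂ : Finset (Sym2 V)} (h₁ : IsPerfectMatchingOn G M₁ S)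
    (h₂ : IsPerfectMatchingOn G M₂ S) {w₁ w₂ : V}
    (e₁ : s(v, w₁) ∈ M₁) (e₂ : s(v, w₂) ∈ M₂) (hw : w₁ ≠ w₂) : False := by
  classical
  -- the alternating step function
  set P : ℕ → V → V := fun n => if n % 2 = 0 then pmPartner M₁ else pmPartner M₂ with hP
  have hPcongr : ∀ m n, m % 2 = n % 2 → P m = P n := by
    intro m n h
    by_cases hm : m % 2 = 0
    · rw [hP]; simp only [if_pos hm, if_pos (h ▸ hm)]
    · rw [hP]; simp only [if_neg hm, if_neg (fun hh => hm (h ▸ hh))]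
  -- the alternating sequence
  set x : ℕ → V := fun n => Nat.rec v (fun n ih => P n ih) n with hxdef
  have hx0 : x 0 = v := rfl
  have hxs : ∀ n, x (n + 1) = P n (x n) := fun n => rfl
  have hvS : v ∈ S := covers_mem_of_edge h₁.2 e₁ (by simp)
  have hmem : ∀ n, x n ∈ S := by
    intro n
    induction n with
    | zero => exact hvS
    | succ n ih =>
      rw [hxs, hP]
      by_cases hn : n % 2 = 0
      · simpa [if_pos hn] using pmPartner_mem h₁ ih
      · simpa [if_neg hn] using pmPartner_mem h₂ ih
  have hadj : ∀ n, G.Adj (x n) (x (n + 1)) := by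
    intro n
    rw [hxs, hP]
    by_cases hn : n % 2 = 0
    · simpa [if_pos hn] using pmPartner_adj h₁ (hmem n)
    · simpa [if_neg hn] using pmPartner_adj h₂ (hmem n)
  have hne : ∀ n, x n ≠ x (n + 1) := fun n => (hadj n).ne
  have hback : ∀ n, P n (x (n + 1)) = x n := by
    intro n
    rw [hxs, hP]
    by_cases hn : n % 2 = 0
    · simpa [if_pos hn] using pmPartner_invol h₁ (hmem n)
    · simpa [if_neg hn] using pmPartner_invol h₂ (hmem n)
  -- forward and backward determinism
  have hfwd : ∀ i j, i % 2 = j % 2 → x i = x j → x (i + 1) = x (j + 1) := by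
    intro i j hp he
    rw [hxs, hxs, hPcongr i j hp, he]
  have hbwd : ∀ i j, i % 2 = j % 2 → x (i + 1) = x (j + 1) → x i = x j := by
    intro i j hp he
    rw [← hback i, ← hback j, hPcongr i j hp, he]
  -- shifting a coincidence at even distance down to 0
  have hshift : ∀ d, d % 2 = 0 → ∀ k i, x i = x (i + d) → ∀ m, m + k = i → x m = x (m + d) := by
    intro d hd k
    induction k with
    | zero =>
      intro i he m hm
      have hmi : m = i := by omega
      subst hmi; exact he
    | succ k ih =>
      intro i he m hm
      have h1 : x (m + 1) = x (m + 1 + d) := ih i he (m + 1) (by omega)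
      have h2 : m + 1 + d = m + d + 1 := by omega
      rw [h2] at h1
      exact hbwd m (m + d) (by omega) h1
  -- no coincidence at odd distance
  have hnocross : ∀ i j, i < j → x i = x j → i % 2 = j % 2 := by
    intro i j hij he
    by_contra hp
    have hodd : (j - i) % 2 = 1 := by omega
    have hmirror : ∀ k, 2 * k < j - i → x (i + k) = x (j - k) := by
      intro k
      induction k with
      | zero => intro _; simpa using he
      | succ k ih =>
        intro hk
        have hprev : x (i + k) = x (j - k) := ih (by omega)
        have hstep : x (i + k + 1) = P (i + k) (x (j - k)) := by
          rw [hxs, hprev]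
        have hpar : (i + k) % 2 = (j - k - 1) % 2 := by omega
        have : P (i + k) (x (j - k)) = x (j - k - 1) := by
          rw [hPcongr _ _ hpar]
          have : j - k = (j - k - 1) + 1 := by omega
          rw [this]
          exact hback _
        have hfin : x (i + k + 1) = x (j - k - 1) := hstep.trans this
        have : j - (k + 1) = j - k - 1 := by omega
        rw [show i + (k + 1) = i + k + 1 by omega, this]
        exact hfin
    have hk : 2 * ((j - i - 1) / 2) < j - i := by omega
    have := hmirror ((j - i - 1) / 2) hk
    have harith : j - ((j - i - 1) / 2) = i + ((j - i - 1) / 2) + 1 := by omega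
    rw [harith] at this
    exact hne _ this
  -- existence of a return to v
  have hret : ∃ n, 0 < n ∧ x n = v := by
    have hmaps : ∀ n ∈ Finset.range (2 * Fintype.card V + 1),
        (x n, n % 2) ∈ (Finset.univ : Finset V) ×ˢ Finset.range 2 := by
      intro n _
      simp [Finset.mem_product, Nat.mod_lt]
      omega
    have hcard : ((Finset.univ : Finset V) ×ˢ Finset.range 2).card <
        (Finset.range (2 * Fintype.card V + 1)).card := by
      simp [Finset.card_product]
      omega
    obtain ⟨i, hi, j, hj, hij, heq⟩ :=
      Finset.exists_ne_map_eq_of_card_lt_of_maps_to hcard hmaps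
    have hx' : x i = x j := (Prod.mk.injEq _ _ _ _ ▸ heq).1
    have hp' : i % 2 = j % 2 := (Prod.mk.injEq _ _ _ _ ▸ heq).2
    rcases Nat.lt_or_ge i j with h | h
    · have : x 0 = x (0 + (j - i)) := by
        have := hshift (j - i) (by omega) i i (by rw [show i + (j - i) = j by omega]; exact hx') 0 (by omega)
        simpa using this
      exact ⟨j - i, by omega, by rw [← hx0, this]; congr 1; omega⟩
    · have hji : j < i := by omega
      have : x 0 = x (0 + (i - j)) := by
        have := hshift (i - j) (by omega) j j (by rw [show j + (i - j) = i by omega]; exact hx'.symm) 0 (by omega)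
        simpa using this
      exact ⟨i - j, by omega, by rw [← hx0, this]; congr 1; omega⟩
  set N := Nat.find hret with hNdef
  obtain ⟨hN0, hxN⟩ : 0 < N ∧ x N = v := Nat.find_spec hret
  have hNmin : ∀ m, 0 < m → x m = v → N ≤ m := fun m h1 h2 => Nat.find_le ⟨h1, h2⟩
  have hNeven : N % 2 = 0 := by
    have := hnocross 0 N hN0 (by rw [hx0, hxN])
    omega
  -- injectivity
  have hinj : ∀ i j, i < j → j ≤ N → x i = x j → i = 0 ∧ j = N := by
    intro i j hij hjN he
    have hp := hnocross i j hij he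
    have hd : x 0 = x (j - i) := by
      have := hshift (j - i) (by omega) i i
        (by rw [show i + (j - i) = j by omega]; exact he) 0 (by omega)
      simpa using this
    have := hNmin (j - i) (by omega) (by rw [← hd, hx0])
    omega
  -- N ≠ 2
  have hx1 : x 1 = w₁ := by
    have h := hxs 0
    rw [hx0, hP] at h
    norm_num at h
    rw [h]
    exact pmPartner_unique h₁.1 h₁.2 e₁
  have hN2 : N ≠ 2 := by
    intro hN
    have h2 : x 2 = v := by rw [← hN]; exact hxN
    have : pmPartner M₂ (x 2) = x 1 := by
      have := hback 1
      rw [hP] at this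
      simpa using this
    rw [h2, hx1] at this
    rw [pmPartner_unique h₂.1 h₂.2 e₂] at this
    exact hw this.symm
  have hN4 : 4 ≤ N := by omega
  -- build the cycle
  let c : G.Walk v v := (seqWalk G x hadj N).copy hx0 hxN
  have hclen : c.length = N := by
    simp [c, seqWalk_length]
  have hcsupp : c.support = (List.range (N + 1)).map x := by
    simp [c, seqWalk_support]
  have hcedges : c.edges = (List.range N).map (fun i => s(x i, x (i + 1))) := by
    simp [c, seqWalk_edges]
  have edge_inj : ∀ a b, a < b → b < N → s(x a, x (a + 1)) = s(x b, x (b + 1)) → False := by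
    intro a b hab hbN he
    rcases Sym2.eq_iff.1 he with ⟨h1, h2⟩ | ⟨h1, h2⟩
    · have := hinj a b hab (by omega) h1
      omega
    · rcases Nat.lt_trichotomy (a + 1) b with h | h | h
      · have := hinj (a + 1) b h (by omega) h2
        omega
      · have hb1 : b + 1 = a + 2 := by omega
        have hx2 : x a = x (a + 2) := by rw [h1, hb1]
        have := hinj a (a + 2) (by omega) (by omega) hx2
        omega
      · omega
  have hcycle : c.IsCycle := by
    refine ⟨⟨⟨?_⟩, ?_⟩, ?_⟩
    · rw [hcedges]
      refine List.Nodup.map_on ?_ List.nodup_range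
      intro a ha b hb he
      rw [List.mem_range] at ha hb
      rcases Nat.lt_trichotomy a b with h | h | h
      · exact absurd he (fun he => edge_inj a b h hb he)
      · exact h
      · exact absurd he.symm (fun he => edge_inj b a h ha he)
    · intro hnil
      have : c.length = 0 := by rw [hnil]; rfl
      omega
    · rw [hcsupp, List.range_succ_eq_map, List.map_cons, List.tail_cons, List.map_map]
      refine List.Nodup.map_on ?_ List.nodup_range
      intro a ha b hb he
      rw [List.mem_range] at ha hb
      simp only [Function.comp] at he
      rcases Nat.lt_trichotomy a b with h | h | h
      · have := hinj (a + 1) (b + 1) (by omega) (by omega) he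
        omega
      · exact h
      · have := hinj (b + 1) (a + 1) (by omega) (by omega) he.symm
        omega
  have heven : Even c.length := by rw [hclen]; exact Nat.even_iff.2 hNeven
  exact hv v c hcycle heven c.start_mem_support

lemma isPMS_insert_insert [DecidableEq V] {G : SimpleGraph V} {T : Finset V} {v w : V}
    (hadj : G.Adj v w) (hvT : v ∉ T) (hwT : w ∉ T) (hT : IsPMS G T) :
    ∃ M, IsPerfectMatchingOn G M (insert v (insert w T)) ∧ s(v, w) ∈ M := by
  obtain ⟨M, hM, hC⟩ := hT
  have hvert : ∀ e ∈ M, ∀ x, x ∈ e → x ∈ T := fun e he x hx => (hC x).2 ⟨e, he, hx⟩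
  refine ⟨insert s(v, w) M, ⟨⟨?_, ?_⟩, ?_⟩, Finset.mem_insert_self _ _⟩
  · intro e he
    rw [Finset.mem_coe] at he
    rcases Finset.mem_insert.1 he with rfl | he
    · exact (SimpleGraph.mem_edgeSet G).2 hadj
    · exact hM.1 he
  · intro e he f hf hef x hxe hxf
    rcases Finset.mem_insert.1 he with rfl | he <;> rcases Finset.mem_insert.1 hf with rfl | hf
    · exact hef rfl
    · have hxT := hvert f hf x hxf
      rcases Sym2.mem_iff.1 hxe with rfl | rfl
      · exact hvT hxT
      · exact hwT hxT
    · have hxT := hvert e he x hxe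
      rcases Sym2.mem_iff.1 hxf with rfl | rfl
      · exact hvT hxT
      · exact hwT hxT
    · exact hM.2 e he f hf hef x hxe hxf
  · intro x
    constructor
    · intro hx
      rcases Finset.mem_insert.1 hx with rfl | hx
      · exact ⟨s(x, w), Finset.mem_insert_self _ _, by simp⟩
      rcases Finset.mem_insert.1 hx with rfl | hx
      · exact ⟨s(v, x), Finset.mem_insert_self _ _, by simp⟩
      · obtain ⟨e, he, hxe⟩ := (hC x).1 hx
        exact ⟨e, Finset.mem_insert_of_mem he, hxe⟩
    · rintro ⟨e, he, hxe⟩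
      rcases Finset.mem_insert.1 he with rfl | he
      · rcases Sym2.mem_iff.1 hxe with rfl | rfl <;> simp
      · have := (hC x).2 ⟨e, he, hxe⟩
        simp [this]

lemma isPMS_remove [DecidableEq V] {G : SimpleGraph V} {S : Finset V} {v : V}
    {M : Finset (Sym2 V)} (hM : IsPerfectMatchingOn G M S) (hvS : v ∈ S) :
    ∃ w, G.Adj v w ∧ w ∈ S ∧ w ≠ v ∧ s(v, w) ∈ M ∧ IsPMS G ((S.erase v).erase w) := by
  set w := pmPartner M v with hwdef
  have hedge : s(v, w) ∈ M := pmPartner_edge_mem hM.2 hvS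
  have hadj : G.Adj v w := pmPartner_adj hM hvS
  have hwS : w ∈ S := pmPartner_mem hM hvS
  refine ⟨w, hadj, hwS, hadj.ne', hedge, M.erase s(v, w), ⟨?_, ?_⟩, ?_⟩
  · intro e he
    rw [Finset.mem_coe] at he
    exact hM.1.1 (Finset.mem_of_mem_erase he)
  · intro e he f hf hef x hxe hxf
    exact hM.1.2 e (Finset.mem_of_mem_erase he) f (Finset.mem_of_mem_erase hf) hef x hxe hxf
  · intro x
    constructor
    · intro hx
      obtain ⟨hxw, hxv, hxS⟩ : x ≠ w ∧ x ≠ v ∧ x ∈ S := by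
        have h1 := Finset.mem_erase.1 hx
        have h2 := Finset.mem_erase.1 h1.2
        exact ⟨h1.1, h2.1, h2.2⟩
      obtain ⟨e, he, hxe⟩ := (hM.2 x).1 hxS
      refine ⟨e, Finset.mem_erase.2 ⟨?_, he⟩, hxe⟩
      rintro rfl
      rcases Sym2.mem_iff.1 hxe with rfl | rfl
      · exact hxv rfl
      · exact hxw rfl
    · rintro ⟨e, he, hxe⟩
      have he' := Finset.mem_of_mem_erase he
      have hene : e ≠ s(v, w) := (Finset.mem_erase.1 he).1
      have hxS : x ∈ S := (hM.2 x).2 ⟨e, he', hxe⟩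
      refine Finset.mem_erase.2 ⟨?_, Finset.mem_erase.2 ⟨?_, hxS⟩⟩
      · rintro rfl
        exact hM.1.2 e he' _ hedge hene w hxe (by simp)
      · rintro rfl
        exact hM.1.2 e he' _ hedge hene x hxe (by simp)

lemma matched_neighbor_unique [Fintype V] [DecidableEq V] (G : SimpleGraph V) (v : V)
    (hv : ∀ (a : V) (c : G.Walk a a), c.IsCycle → Even c.length → v ∉ c.support)
    {T : Finset V} (hvT : v ∉ T) {w₁ w₂ : V} (h1 : G.Adj v w₁) (h2 : G.Adj v w₂)
    (hw₁T : w₁ ∈ T) (hw₂T : w₂ ∈ T) (hp1 : IsPMS G (T.erase w₁))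
    (hp2 : IsPMS G (T.erase w₂)) : w₁ = w₂ := by
  by_contra hne
  obtain ⟨M₁, hM₁, he₁⟩ := isPMS_insert_insert h1 (fun h => hvT (Finset.mem_of_mem_erase h))
    (Finset.notMem_erase w₁ T) hp1
  obtain ⟨M₂, hM₂, he₂⟩ := isPMS_insert_insert h2 (fun h => hvT (Finset.mem_of_mem_erase h))
    (Finset.notMem_erase w₂ T) hp2
  rw [Finset.insert_erase hw₁T] at hM₁
  rw [Finset.insert_erase hw₂T] at hM₂
  exact no_two_partners G v hv hM₁ hM₂ he₁ he₂ hne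

open Classical in
lemma pmPoly_split [Fintype V] [DecidableEq V] (G : SimpleGraph V) (A : Finset V) (a : V)
    (ha : a ∈ A) :
    pmPoly G A =
      (∑ T ∈ (A.erase a).powerset, if IsPMS G T then (X : Polynomial ℤ) ^ (T.card / 2) else 0) +
      ∑ T ∈ (A.erase a).powerset,
        if IsPMS G (insert a T) then (X : Polynomial ℤ) ^ ((insert a T).card / 2) else 0 := by
  rw [pmPoly]
  conv_lhs => rw [← Finset.insert_erase ha]
  rw [Finset.sum_powerset_insert (Finset.notMem_erase a A)]

open Classical in
/-- if the vertex `v` lies on no even cycle and has neighbors `w₁, …, w_r`,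
then `p(G; z) = p(G − v; z) + z·∑ᵢ p(G − {v, wᵢ}; z)`. -/
theorem stmt5 [Fintype V] [DecidableEq V] (G : SimpleGraph V) (v : V)
    (hv : ∀ (a : V) (c : G.Walk a a), c.IsCycle → Even c.length → v ∉ c.support) :
    pmPoly G Finset.univ =
      pmPoly G (Finset.univ.erase v) +
        X * ∑ w ∈ G.neighborFinset v, pmPoly G ((Finset.univ.erase v).erase w) := by
  classical
  have hvU : v ∉ Finset.univ.erase v := Finset.notMem_erase v _
  rw [pmPoly_split G Finset.univ v (Finset.mem_univ v)]
  congr 1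
  -- key pointwise identity
  have key : ∀ T ∈ (Finset.univ.erase v).powerset,
      (if IsPMS G (insert v T) then (X : Polynomial ℤ) ^ ((insert v T).card / 2) else 0) =
      ∑ w ∈ G.neighborFinset v,
        (if w ∈ T ∧ IsPMS G (T.erase w) then (X : Polynomial ℤ) ^ ((T.erase w).card / 2 + 1)
          else 0) := by
    intro T hT
    have hvT : v ∉ T := fun h => hvU (Finset.mem_powerset.1 hT h)
    have herase : (insert v T).erase v = T := Finset.erase_insert hvT
    by_cases hpms : IsPMS G (insert v T)
    · obtain ⟨M, hM⟩ := hpms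
      obtain ⟨w₀, hadj₀, hw₀mem, hw₀ne, hedge₀, hpms₀⟩ :=
        isPMS_remove hM (Finset.mem_insert_self v T)
      rw [herase] at hpms₀
      have hw₀T : w₀ ∈ T := by
        rcases Finset.mem_insert.1 hw₀mem with h | h
        · exact absurd h hw₀ne
        · exact h
      rw [if_pos ⟨M, hM⟩]
      rw [Finset.sum_eq_single_of_mem w₀
        ((SimpleGraph.mem_neighborFinset G v w₀).2 hadj₀)]
      · rw [if_pos ⟨hw₀T, hpms₀⟩]
        congr 1
        rw [Finset.card_insert_of_notMem hvT, Finset.card_erase_of_mem hw₀T]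
        have hpos : 1 ≤ T.card := Finset.card_pos.2 ⟨w₀, hw₀T⟩
        omega
      · intro w hwnb hwne
        rw [if_neg]
        rintro ⟨hwT, hpmsw⟩
        exact hwne (matched_neighbor_unique G v hv hvT
          ((SimpleGraph.mem_neighborFinset G v w).1 hwnb) hadj₀ hwT hw₀T hpmsw hpms₀)
    · rw [if_neg hpms, eq_comm]
      apply Finset.sum_eq_zero
      intro w hw
      rw [if_neg]
      rintro ⟨hwT, hpmsw⟩
      apply hpms
      obtain ⟨M', hM', -⟩ := isPMS_insert_insert ((SimpleGraph.mem_neighborFinset G v w).1 hw)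
        (fun h => hvT (Finset.mem_of_mem_erase h)) (Finset.notMem_erase w T) hpmsw
      rw [Finset.insert_erase hwT] at hM'
      exact ⟨M', hM'⟩
  rw [Finset.sum_congr rfl key, Finset.sum_comm, Finset.mul_sum]
  apply Finset.sum_congr rfl
  intro w hw
  have hadj : G.Adj v w := (SimpleGraph.mem_neighborFinset G v w).1 hw
  have hwU : w ∈ Finset.univ.erase v := Finset.mem_erase.2 ⟨hadj.ne', Finset.mem_univ w⟩
  have hUe : Finset.univ.erase v = insert w ((Finset.univ.erase v).erase w) :=
    (Finset.insert_erase hwU).symm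
  conv_lhs => rw [hUe, Finset.sum_powerset_insert (Finset.notMem_erase w _)]
  have h1 : ∑ T ∈ ((Finset.univ.erase v).erase w).powerset,
      (if w ∈ T ∧ IsPMS G (T.erase w) then (X : Polynomial ℤ) ^ ((T.erase w).card / 2 + 1)
        else 0) = 0 := by
    apply Finset.sum_eq_zero
    intro T hT
    have hwT : w ∉ T := fun h => Finset.notMem_erase w _ (Finset.mem_powerset.1 hT h)
    exact if_neg (fun hc => hwT hc.1)
  rw [h1, zero_add, pmPoly, Finset.mul_sum]
  apply Finset.sum_congr rfl
  intro T hT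
  have hwT : w ∉ T := fun h => Finset.notMem_erase w _ (Finset.mem_powerset.1 hT h)
  have herase : (insert w T).erase w = T := Finset.erase_insert hwT
  rw [herase]
  by_cases hp : IsPMS G T
  · rw [if_pos ⟨Finset.mem_insert_self w T, hp⟩, if_pos hp, pow_succ, mul_comm]
  · rw [if_neg (fun hc => hp hc.2), if_neg hp, mul_zero]
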